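/- arXiv:2104.00957 — 4 statements merged into one kernel-verified Lean document; each statement's English description precedes it below -/
import Mathlib

section
/- For every complex number s with Re(s) > 3, the first moment sum κ(s;1) := ∑_{k=1}^∞ k ζ(s,k) evaluates as κ(s;1) = (1/2){ζ(s−1) + ζ(s−2)}, where ζ denotes the Riemann zeta function. -/
open Complex

/-- The Hurwitz zeta function `ζ(s, α) = ∑_{n=0}^∞ (n + α)^(-s)`. -/
noncomputable def hzeta (s : ℂ) (α : ℝ) : ℂ := ∑' n : ℕ, ((n : ℂ) + (α : ℂ)) ^ (-s)

private lemma gaussC (n : ℕ) :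
    ∑ k ∈ Finset.range (n + 1), ((k : ℂ) + 1) = ((n : ℂ) + 1) * ((n : ℂ) + 2) / 2 := by
  induction n with
  | zero => norm_num
  | succ n ih =>
    rw [Finset.sum_range_succ, ih]
    push_cast
    ring

theorem first_moment_sum_hurwitzZeta (s : ℂ) (hs : 3 < s.re) :
    ∑' k : ℕ, ((k : ℂ) + 1) * hzeta s ((k : ℝ) + 1)
      = (1 / 2) * (riemannZeta (s - 1) + riemannZeta (s - 2)) := by
  classical
  set F : ℕ × ℕ → ℂ := fun p => ((p.1 : ℂ) + 1) * ((p.1 : ℂ) + (p.2 : ℂ) + 1) ^ (-s) with hFdef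
  -- Norm of the summand
  have hnorm : ∀ p : ℕ × ℕ,
      ‖F p‖ = ((p.1 : ℝ) + 1) * (((p.1 : ℝ) + (p.2 : ℝ) + 1) ^ (-s.re)) := by
    rintro ⟨k, l⟩
    have hb : ((k : ℂ) + (l : ℂ) + 1) = (((k : ℝ) + (l : ℝ) + 1 : ℝ) : ℂ) := by push_cast; ring
    have hbpos : (0 : ℝ) < (k : ℝ) + (l : ℝ) + 1 := by positivity
    simp only [F, norm_mul, hb]
    rw [Complex.norm_cpow_eq_rpow_re_of_pos hbpos]
    have : ‖((k : ℂ) + 1)‖ = (k : ℝ) + 1 := by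
      rw [show ((k : ℂ) + 1) = (((k + 1 : ℕ)) : ℂ) by push_cast; ring, Complex.norm_natCast]
      push_cast
      ring
    rw [this, Complex.neg_re]
  -- summability of the norms over the sigma type of antidiagonals
  have hbnd : Summable (fun n : ℕ => ((n : ℝ) + 1) ^ (2 - s.re)) := by
    have h1 : (2 - s.re) < -1 := by linarith
    have := (summable_nat_add_iff (f := fun n : ℕ => (n : ℝ) ^ (2 - s.re)) 1).mpr
      (Real.summable_nat_rpow.mpr h1)
    convert this using 2 with n
    · rfl
    push_cast
    ring_nf
  have hsigNorm : Summable (fun x : Σ n : ℕ, Finset.HasAntidiagonal.antidiagonal n => ‖F x.2‖) := by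
    apply (summable_sigma_of_nonneg (fun x => norm_nonneg _)).mpr
    constructor
    · intro n
      exact Summable.of_finite
    · apply Summable.of_nonneg_of_le (fun n => tsum_nonneg fun _ => norm_nonneg _)
        (fun n => ?_) hbnd
      rw [tsum_fintype]
      have hle : ∀ x : (Finset.HasAntidiagonal.antidiagonal n : Finset (ℕ × ℕ)),
          ‖F (x : ℕ × ℕ)‖ ≤ ((n : ℝ) + 1) * ((n : ℝ) + 1) ^ (-s.re) := by
        rintro ⟨⟨k, l⟩, hkl⟩
        rw [Finset.HasAntidiagonal.mem_antidiagonal] at hkl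
        rw [hnorm]
        have hsum : (k : ℝ) + (l : ℝ) + 1 = (n : ℝ) + 1 := by
          push_cast [← hkl]; ring
        rw [hsum]
        have hk : (k : ℝ) + 1 ≤ (n : ℝ) + 1 := by
          have : k ≤ n := by omega
          exact_mod_cast by omega
        have hpos : (0 : ℝ) ≤ ((n : ℝ) + 1) ^ (-s.re) := Real.rpow_nonneg (by positivity) _
        exact mul_le_mul_of_nonneg_right hk hpos
      calc ∑ x : (Finset.HasAntidiagonal.antidiagonal n : Finset (ℕ × ℕ)), ‖F (x : ℕ × ℕ)‖
          ≤ ∑ _x : (Finset.HasAntidiagonal.antidiagonal n : Finset (ℕ × ℕ)),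
              ((n : ℝ) + 1) * ((n : ℝ) + 1) ^ (-s.re) := Finset.sum_le_sum fun x _ => hle x
        _ = ((n : ℝ) + 1) * (((n : ℝ) + 1) * ((n : ℝ) + 1) ^ (-s.re)) := by
            rw [Finset.sum_const]
            simp [Finset.Nat.card_antidiagonal]
        _ = ((n : ℝ) + 1) ^ (2 - s.re) := by
            rw [show (2 - s.re) = 1 + (1 + -s.re) by ring]
            rw [Real.rpow_add (by positivity), Real.rpow_add (by positivity),
              Real.rpow_one]
  have hsig : Summable (fun x : Σ n : ℕ, Finset.HasAntidiagonal.antidiagonal n => F x.2) :=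
    Summable.of_norm hsigNorm
  have hFsum : Summable F := Finset.HasAntidiagonal.sigmaAntidiagonalEquivProd.summable_iff.mp hsig
  -- identify the left-hand side with the sum over pairs
  have h1 : ∀ k : ℕ, ((k : ℂ) + 1) * hzeta s ((k : ℝ) + 1) = ∑' n : ℕ, F (k, n) := by
    intro k
    rw [hzeta, ← tsum_mul_left]
    congr 1
    funext n
    simp only [F]
    rw [show ((n : ℂ) + (((k : ℝ) + 1 : ℝ) : ℂ)) = ((k : ℂ) + (n : ℂ) + 1) by push_cast; ring]
  -- the finite antidiagonal sums
  have hfin : ∀ n : ℕ, ∑ kl ∈ Finset.HasAntidiagonal.antidiagonal n, F kl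
      = (((n : ℂ) + 1) * ((n : ℂ) + 2) / 2) * ((n : ℂ) + 1) ^ (-s) := by
    intro n
    rw [Finset.Nat.sum_antidiagonal_eq_sum_range_succ_mk]
    have hterm : ∀ k ∈ Finset.range (n + 1), F (k, n - k)
        = ((k : ℂ) + 1) * ((n : ℂ) + 1) ^ (-s) := by
      intro k hk
      have hk' : k ≤ n := Finset.mem_range_succ_iff.mp hk
      simp only [F]
      congr 2
      rw [Nat.cast_sub hk']
      ring
    rw [Finset.sum_congr rfl hterm, ← Finset.sum_mul, gaussC]
  -- per-term identity splitting into two zeta summands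
  have hsplit : ∀ n : ℕ, (((n : ℂ) + 1) * ((n : ℂ) + 2) / 2) * ((n : ℂ) + 1) ^ (-s)
      = (1 / 2) * (((n : ℂ) + 1) ^ (-(s - 1)) + ((n : ℂ) + 1) ^ (-(s - 2))) := by
    intro n
    have hne : ((n : ℂ) + 1) ≠ 0 := by
      intro h
      have := congrArg Complex.re h
      simp at this
      norm_cast at this
    have e1 : ((n : ℂ) + 1) ^ (-(s - 1)) = ((n : ℂ) + 1) * ((n : ℂ) + 1) ^ (-s) := by
      rw [show (-(s - 1)) = 1 + -s by ring, cpow_add _ _ hne, cpow_one]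
    have e2 : ((n : ℂ) + 1) ^ (-(s - 2)) = (((n : ℂ) + 1) * ((n : ℂ) + 1)) * ((n : ℂ) + 1) ^ (-s) := by
      rw [show (-(s - 2)) = 2 + -s by ring, cpow_add _ _ hne]
      congr 1
      rw [show (2 : ℂ) = ((2 : ℕ) : ℂ) by norm_num, cpow_natCast]
      ring
    rw [e1, e2]
    ring
  -- summability of the two zeta summands
  have hsum1 : Summable (fun n : ℕ => ((n : ℂ) + 1) ^ (-(s - 1))) := by
    have h1 : 1 < (s - 1).re := by simp [Complex.sub_re]; linarith
    have := (summable_nat_add_iff (f := fun n : ℕ => 1 / (n : ℂ) ^ (s - 1)) 1).mpr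
      (Complex.summable_one_div_nat_cpow.mpr h1)
    apply this.congr
    intro n
    rw [cpow_neg, one_div]
    push_cast
    ring_nf
  have hsum2 : Summable (fun n : ℕ => ((n : ℂ) + 1) ^ (-(s - 2))) := by
    have h1 : 1 < (s - 2).re := by simp [Complex.sub_re]; linarith
    have := (summable_nat_add_iff (f := fun n : ℕ => 1 / (n : ℂ) ^ (s - 2)) 1).mpr
      (Complex.summable_one_div_nat_cpow.mpr h1)
    apply this.congr
    intro n
    rw [cpow_neg, one_div]
    push_cast
    ring_nf
  -- zeta values
  have hz1 : riemannZeta (s - 1) = ∑' n : ℕ, ((n : ℂ) + 1) ^ (-(s - 1)) := by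
    rw [zeta_eq_tsum_one_div_nat_add_one_cpow (by simp [Complex.sub_re]; linarith)]
    congr 1
    funext n
    rw [cpow_neg, one_div]
  have hz2 : riemannZeta (s - 2) = ∑' n : ℕ, ((n : ℂ) + 1) ^ (-(s - 2)) := by
    rw [zeta_eq_tsum_one_div_nat_add_one_cpow (by simp [Complex.sub_re]; linarith)]
    congr 1
    funext n
    rw [cpow_neg, one_div]
  -- main chain
  calc ∑' k : ℕ, ((k : ℂ) + 1) * hzeta s ((k : ℝ) + 1)
      = ∑' k : ℕ, ∑' n : ℕ, F (k, n) := tsum_congr h1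
    _ = ∑' p : ℕ × ℕ, F p := (Summable.tsum_prod hFsum).symm
    _ = ∑' x : Σ n : ℕ, Finset.HasAntidiagonal.antidiagonal n, F x.2 :=
        (Finset.HasAntidiagonal.sigmaAntidiagonalEquivProd.tsum_eq F).symm
    _ = ∑' n : ℕ, ∑' kl : (Finset.HasAntidiagonal.antidiagonal n : Finset (ℕ × ℕ)), F kl := Summable.tsum_sigma hsig
    _ = ∑' n : ℕ, ∑ kl ∈ Finset.HasAntidiagonal.antidiagonal n, F kl := by
        congr 1
        funext n
        rw [tsum_fintype]
        exact Finset.sum_coe_sort _ _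
    _ = ∑' n : ℕ, (1 / 2) * (((n : ℂ) + 1) ^ (-(s - 1)) + ((n : ℂ) + 1) ^ (-(s - 2))) := by
        congr 1
        funext n
        rw [hfin n, hsplit n]
    _ = (1 / 2) * (riemannZeta (s - 1) + riemannZeta (s - 2)) := by
        rw [tsum_mul_left, Summable.tsum_add hsum1 hsum2, hz1, hz2]
end

section
/- For every complex number s with Re(s) > 3, one has ∑_{k=1}^∞ k ζ(s, 2k) = (1/8){ (1 + 2^{1−s}) ζ(s−1) + ζ(s−2) − 2^{1−s} ( ζ(s−1, 1/2) + (1/2) ζ(s, 1/2) ) }, where ζ(·) is the Riemann zeta function and ζ(·,·) is the Hurwitz zeta function. -/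
open Complex

namespace FM

lemma rsum {a : ℝ} (ha : 1 < a) : Summable (fun n : ℕ => ((n : ℝ) + 1) ^ (-a)) := by
  have h1 := (Real.summable_one_div_nat_rpow (p := a)).2 ha
  have h2 := (summable_nat_add_iff (f := fun n : ℕ => 1 / (n : ℝ) ^ a) 1).2 h1
  refine h2.congr fun n => ?_
  push_cast
  rw [one_div, ← Real.rpow_neg (by positivity)]

lemma norm_cpow (w : ℂ) {x : ℝ} (hx : 0 < x) : ‖((x : ℂ)) ^ (-w)‖ = x ^ (-w.re) := by
  rw [Complex.norm_cpow_eq_rpow_re_of_pos hx, neg_re]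

lemma summable_aux {w : ℂ} (hw : 1 < w.re) {u : ℕ → ℝ} (hu : ∀ n : ℕ, (n : ℝ) + 1 ≤ u n) :
    Summable (fun n : ℕ => (Complex.ofReal (u n)) ^ (-w)) := by
  refine Summable.of_norm_bounded (rsum hw) fun n => ?_
  have h0 : (0 : ℝ) < u n := lt_of_lt_of_le (by positivity) (hu n)
  rw [norm_cpow w h0]
  exact Real.rpow_le_rpow_of_nonpos (by positivity) (hu n) (by linarith)

lemma zeta_tsum {w : ℂ} (hw : 1 < w.re) :
    ∑' n : ℕ, ((n : ℂ) + 1) ^ (-w) = riemannZeta w := by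
  rw [zeta_eq_tsum_one_div_nat_add_one_cpow hw]
  exact tsum_congr fun n => by rw [cpow_neg, one_div]


lemma nk_norm (k : ℕ) : ‖(k : ℂ) + 1‖ = (k : ℝ) + 1 := by
  rw [show ((k : ℂ) + 1) = (((k : ℕ) + 1 : ℕ) : ℂ) by push_cast; ring, Complex.norm_natCast]
  push_cast; ring

lemma pair_summable {s : ℂ} (hs : 3 < s.re) {c : ℝ} (hc : 1 ≤ c) :
    Summable (fun p : ℕ × ℕ => ((p.1 : ℂ) + 1) * ((p.1 : ℂ) + (p.2 : ℂ) + (c : ℂ)) ^ (-s)) := by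
  set a : ℝ := (s.re + 1) / 2 with ha_def
  set b : ℝ := (s.re - 1) / 2 with hb_def
  have hb : 1 < b := by rw [hb_def]; linarith
  have ha1 : 1 < a - 1 := by rw [ha_def]; linarith
  have hg : Summable (fun p : ℕ × ℕ =>
      (((p.1 : ℝ) + 1) ^ (-(a - 1))) * (((p.2 : ℝ) + 1) ^ (-b))) := by
    refine summable_mul_of_summable_norm (f := fun k : ℕ => ((k : ℝ) + 1) ^ (-(a - 1)))
      (g := fun j : ℕ => ((j : ℝ) + 1) ^ (-b)) ?_ ?_
    · exact (rsum ha1).congr fun n =>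
        (Real.norm_of_nonneg (Real.rpow_nonneg (by positivity) _)).symm
    · exact (rsum hb).congr fun n =>
        (Real.norm_of_nonneg (Real.rpow_nonneg (by positivity) _)).symm
  refine Summable.of_norm_bounded hg fun p => ?_
  obtain ⟨k, j⟩ := p
  have hc0 : (0 : ℝ) < c := lt_of_lt_of_le one_pos hc
  have hkj : (0 : ℝ) < (k : ℝ) + j + c := by positivity
  have hbase : ((k : ℂ) + (j : ℂ) + (c : ℂ)) = Complex.ofReal ((k : ℝ) + j + c) := by
    push_cast; ring
  rw [norm_mul, hbase, norm_cpow s hkj, nk_norm]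
  have hsplit : ((k : ℝ) + j + c) ^ (-s.re)
      = ((k : ℝ) + j + c) ^ (-a) * ((k : ℝ) + j + c) ^ (-b) := by
    rw [← Real.rpow_add hkj]; congr 1; rw [ha_def, hb_def]; ring
  have h1 : ((k : ℝ) + j + c) ^ (-a) ≤ ((k : ℝ) + 1) ^ (-a) :=
    Real.rpow_le_rpow_of_nonpos (by positivity) (by linarith) (by linarith)
  have h2 : ((k : ℝ) + j + c) ^ (-b) ≤ ((j : ℝ) + 1) ^ (-b) :=
    Real.rpow_le_rpow_of_nonpos (by positivity) (by linarith) (by linarith)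
  have hmerge : ((k : ℝ) + 1) * ((k : ℝ) + 1) ^ (-a) = ((k : ℝ) + 1) ^ (-(a - 1)) := by
    rw [show -(a - 1) = 1 + -a by ring, Real.rpow_add (by positivity), Real.rpow_one]
  calc ((k : ℝ) + 1) * ((k : ℝ) + j + c) ^ (-s.re)
      = ((k : ℝ) + 1) * (((k : ℝ) + j + c) ^ (-a) * ((k : ℝ) + j + c) ^ (-b)) := by
        rw [hsplit]
    _ ≤ ((k : ℝ) + 1) * (((k : ℝ) + 1) ^ (-a) * ((j : ℝ) + 1) ^ (-b)) := by
        apply mul_le_mul_of_nonneg_left _ (by positivity)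
        exact mul_le_mul h1 h2 (Real.rpow_nonneg hkj.le _) (Real.rpow_nonneg (by positivity) _)
    _ = ((k : ℝ) + 1) ^ (-(a - 1)) * ((j : ℝ) + 1) ^ (-b) := by rw [← hmerge]; ring

lemma gauss (n : ℕ) : ∑ k ∈ Finset.range n, ((k : ℂ) + 1) = (n : ℂ) * ((n : ℂ) + 1) / 2 := by
  induction n with
  | zero => simp
  | succ m ih => rw [Finset.sum_range_succ, ih]; push_cast; ring


lemma diag {s : ℂ} (hs : 3 < s.re) {c : ℝ} (hc : 1 ≤ c) :
    ∑' (k : ℕ) (j : ℕ), ((k : ℂ) + 1) * ((k : ℂ) + (j : ℂ) + (c : ℂ)) ^ (-s)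
      = ∑' m : ℕ, (((m : ℂ) + 1) * ((m : ℂ) + 2) / 2) * ((m : ℂ) + (c : ℂ)) ^ (-s) := by
  classical
  set f : ℕ × ℕ → ℂ :=
    fun p => ((p.1 : ℂ) + 1) * ((p.1 : ℂ) + (p.2 : ℂ) + (c : ℂ)) ^ (-s) with hf
  have hsf : Summable f := pair_summable hs hc
  set F : ℕ × ℕ → ℂ :=
    fun q => if q.2 ≤ q.1 then ((q.2 : ℂ) + 1) * ((q.1 : ℂ) + (c : ℂ)) ^ (-s) else 0 with hF
  set i : ℕ × ℕ → ℕ × ℕ := fun p => (p.1 + p.2, p.1) with hi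
  have hinj : Function.Injective i := by
    intro p q h
    rw [hi, Prod.ext_iff] at h
    simp only at h
    exact Prod.ext h.2 (by omega)
  have hFi : ∀ p : ℕ × ℕ, F (i p) = f p := by
    rintro ⟨k, j⟩
    rw [hF, hi, hf]
    simp only
    rw [if_pos (by omega : k ≤ k + j)]
    push_cast
    ring
  have hsupp : Function.support F ⊆ Set.range i := by
    rintro ⟨m, k⟩ hq
    by_cases h : k ≤ m
    · refine ⟨(k, m - k), ?_⟩
      rw [hi]
      simp only [Prod.mk.injEq]
      exact ⟨by omega, trivial⟩
    · exfalso; apply hq; rw [hF]; simp only; rw [if_neg h]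
  have hzero : ∀ x ∉ Set.range i, F x = 0 := by
    intro x hx
    by_contra h
    exact hx (hsupp h)
  have hFs : Summable F := by
    rw [← hinj.summable_iff hzero]
    exact hsf.congr fun p => (hFi p).symm
  have hfiber : ∀ m : ℕ, ∀ k ∉ Finset.range (m + 1), F (m, k) = 0 := by
    intro m k hk
    rw [Finset.mem_range] at hk
    rw [hF]; simp only; rw [if_neg (by omega)]
  calc ∑' (k : ℕ) (j : ℕ), f (k, j)
      = ∑' p : ℕ × ℕ, f p := (Summable.tsum_prod' hsf fun k => hsf.prod_factor k).symm
    _ = ∑' p : ℕ × ℕ, F (i p) := (tsum_congr hFi).symm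
    _ = ∑' q : ℕ × ℕ, F q := hinj.tsum_eq hsupp
    _ = ∑' (m : ℕ) (k : ℕ), F (m, k) :=
        Summable.tsum_prod' hFs fun m => summable_of_ne_finset_zero (hfiber m)
    _ = ∑' m : ℕ, (((m : ℂ) + 1) * ((m : ℂ) + 2) / 2) * ((m : ℂ) + (c : ℂ)) ^ (-s) := by
        refine tsum_congr fun m => ?_
        rw [tsum_eq_sum (hfiber m)]
        have : ∀ k ∈ Finset.range (m + 1),
            F (m, k) = ((k : ℂ) + 1) * ((m : ℂ) + (c : ℂ)) ^ (-s) := by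
          intro k hk
          rw [Finset.mem_range] at hk
          rw [hF]; simp only; rw [if_pos (by omega)]
        rw [Finset.sum_congr rfl this, ← Finset.sum_mul, gauss]
        push_cast
        ring


lemma half_pow (w : ℂ) : (((1 : ℝ) / 2 : ℝ) : ℂ) ^ (-w) = (2 : ℂ) ^ w := by
  have harg : (2 : ℂ).arg ≠ Real.pi := by
    rw [show (2 : ℂ) = ((2 : ℝ) : ℂ) by norm_num,
      Complex.arg_ofReal_of_nonneg (by norm_num)]
    exact Ne.symm Real.pi_ne_zero
  rw [show (((1 : ℝ) / 2 : ℝ) : ℂ) = (2 : ℂ)⁻¹ by norm_num,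
    Complex.inv_cpow _ _ harg, cpow_neg, inv_inv]

lemma two_mul_cpow (w : ℂ) {x : ℝ} (hx : 0 ≤ x) :
    (((2 * x : ℝ)) : ℂ) ^ (-w) = (2 : ℂ) ^ (-w) * ((x : ℝ) : ℂ) ^ (-w) := by
  rw [Complex.ofReal_mul, Complex.mul_cpow_ofReal_nonneg (by norm_num) hx]
  norm_num

lemma half_lemma {w : ℂ} (hw : 1 < w.re) :
    hzeta w (1 / 2) = ((2 : ℂ) ^ w - 1) * riemannZeta w := by
  have he : Summable (fun j : ℕ => ((2 * (j : ℝ) + 1 : ℝ) : ℂ) ^ (-w)) :=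
    summable_aux hw (u := fun j => 2 * j + 1) (fun n => by push_cast; linarith)
  have ho : Summable (fun j : ℕ => ((2 * (j : ℝ) + 2 : ℝ) : ℂ) ^ (-w)) :=
    summable_aux hw (u := fun j => 2 * j + 2) (fun n => by push_cast; linarith)
  have he' : Summable (fun j : ℕ => (((2 * j : ℕ) : ℂ) + 1) ^ (-w)) :=
    he.congr fun j => by congr 1; push_cast; ring
  have ho' : Summable (fun j : ℕ => (((2 * j + 1 : ℕ) : ℂ) + 1) ^ (-w)) :=
    ho.congr fun j => by congr 1; push_cast; ring
  have hsplit := tsum_even_add_odd (f := fun n : ℕ => ((n : ℂ) + 1) ^ (-w)) he' ho'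
  rw [zeta_tsum hw] at hsplit
  -- odd sum value
  have hodd : ∑' j : ℕ, (((2 * j + 1 : ℕ) : ℂ) + 1) ^ (-w)
      = (2 : ℂ) ^ (-w) * riemannZeta w := by
    have : ∀ j : ℕ, (((2 * j + 1 : ℕ) : ℂ) + 1) ^ (-w)
        = (2 : ℂ) ^ (-w) * (((j : ℝ) + 1 : ℝ) : ℂ) ^ (-w) := by
      intro j
      rw [show (((2 * j + 1 : ℕ) : ℂ) + 1) = (((2 * ((j : ℝ) + 1) : ℝ)) : ℂ) by
        push_cast; ring, two_mul_cpow w (by positivity)]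
    rw [tsum_congr this, tsum_mul_left]
    congr 1
    rw [← zeta_tsum hw]
    exact tsum_congr fun n => by congr 1; push_cast; ring
  rw [hodd] at hsplit
  -- hzeta in terms of even sum
  have hzeq : hzeta w (1 / 2)
      = (2 : ℂ) ^ w * ∑' j : ℕ, (((2 * j : ℕ) : ℂ) + 1) ^ (-w) := by
    rw [hzeta, ← tsum_mul_left]
    refine tsum_congr fun n => ?_
    rw [show ((n : ℂ) + (((1 : ℝ) / 2 : ℝ)) : ℂ)
        = (((1 : ℝ) / 2 : ℝ) : ℂ) * (((2 * n + 1 : ℕ)) : ℂ) by push_cast; ring]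
    rw [show (((2 * n + 1 : ℕ)) : ℂ) = (((2 * n + 1 : ℕ) : ℝ) : ℂ) by push_cast; ring]
    rw [show (((1 : ℝ) / 2 : ℝ) : ℂ) = ((((1 : ℝ) / 2 : ℝ) : ℝ) : ℂ) by norm_num]
    rw [Complex.mul_cpow_ofReal_nonneg (by norm_num) (by positivity), half_pow]
    congr 2
    push_cast; ring
  have hmul : (2 : ℂ) ^ w * (2 : ℂ) ^ (-w) = 1 := by
    rw [← Complex.cpow_add _ _ two_ne_zero]; simp
  have heven : ∑' j : ℕ, (((2 * j : ℕ) : ℂ) + 1) ^ (-w)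
      = riemannZeta w - (2 : ℂ) ^ (-w) * riemannZeta w := by
    linear_combination hsplit
  rw [hzeq, heven]
  linear_combination (-riemannZeta w) * hmul

lemma Pval {w : ℂ} (hw : 1 < w.re) :
    ∑' m : ℕ, ((m : ℂ) + (((3 : ℝ) / 2 : ℝ) : ℂ)) ^ (-w)
      = hzeta w (1 / 2) - (2 : ℂ) ^ w := by
  have hsum : Summable (fun n : ℕ => ((n : ℂ) + (((1 : ℝ) / 2 : ℝ) : ℂ)) ^ (-w)) := by
    refine (summable_nat_add_iff 1).mp ?_
    refine (summable_aux hw (u := fun n => (n : ℝ) + 3 / 2)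
      (fun n => by push_cast; linarith)).congr fun n => ?_
    congr 1; push_cast; ring
  have h0 : hzeta w (1 / 2)
      = (2 : ℂ) ^ w + ∑' m : ℕ, ((m : ℂ) + (((3 : ℝ) / 2 : ℝ) : ℂ)) ^ (-w) := by
    rw [hzeta, Summable.tsum_eq_zero_add hsum]
    congr 1
    · rw [show ((0 : ℕ) : ℂ) + (((1 : ℝ) / 2 : ℝ) : ℂ) = (((1 : ℝ) / 2 : ℝ) : ℂ) by
        push_cast; ring, half_pow]
    · exact tsum_congr fun n => by congr 1; push_cast; ring
  rw [h0]; ring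


lemma re_sub_one {s : ℂ} (hs : 3 < s.re) : 1 < (s - 1).re := by
  rw [Complex.sub_re, Complex.one_re]; linarith

lemma re_sub_two {s : ℂ} (hs : 3 < s.re) : 1 < (s - 2).re := by
  have : (2 : ℂ).re = 2 := by norm_num
  rw [Complex.sub_re, this]; linarith

lemma evalE {s : ℂ} (hs : 3 < s.re) :
    ∑' m : ℕ, (((m : ℂ) + 1) * ((m : ℂ) + 2) / 2) * ((m : ℂ) + ((1 : ℝ) : ℂ)) ^ (-s)
      = (1 / 2) * riemannZeta (s - 2) + (1 / 2) * riemannZeta (s - 1) := by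
  have h2 := re_sub_two hs
  have h1 := re_sub_one hs
  have key : ∀ m : ℕ, (((m : ℂ) + 1) * ((m : ℂ) + 2) / 2) * ((m : ℂ) + ((1 : ℝ) : ℂ)) ^ (-s)
      = (1 / 2) * ((m : ℂ) + 1) ^ (-(s - 2)) + (1 / 2) * ((m : ℂ) + 1) ^ (-(s - 1)) := by
    intro m
    have hne : ((m : ℂ) + 1) ≠ 0 := by
      exact_mod_cast Nat.cast_add_one_ne_zero (R := ℂ) m
    have ha : ((m : ℂ) + 1) ^ (-(s - 2)) = ((m : ℂ) + 1) ^ (2 : ℕ) * ((m : ℂ) + 1) ^ (-s) := by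
      rw [show -(s - 2) = ((2 : ℕ) : ℂ) + (-s) by push_cast; ring,
        Complex.cpow_add _ _ hne, Complex.cpow_natCast]
    have hb : ((m : ℂ) + 1) ^ (-(s - 1)) = ((m : ℂ) + 1) * ((m : ℂ) + 1) ^ (-s) := by
      rw [show -(s - 1) = (1 : ℂ) + (-s) by ring, Complex.cpow_add _ _ hne, Complex.cpow_one]
    rw [ha, hb]
    push_cast
    ring
  have sum2 : Summable (fun m : ℕ => (1 / 2 : ℂ) * ((m : ℂ) + 1) ^ (-(s - 2))) := by
    refine Summable.mul_left _ ?_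
    exact (summable_aux h2 (u := fun n => (n : ℝ) + 1) (fun n => le_refl _)).congr
      fun n => by congr 1; push_cast; ring
  have sum1 : Summable (fun m : ℕ => (1 / 2 : ℂ) * ((m : ℂ) + 1) ^ (-(s - 1))) := by
    refine Summable.mul_left _ ?_
    exact (summable_aux h1 (u := fun n => (n : ℝ) + 1) (fun n => le_refl _)).congr
      fun n => by congr 1; push_cast; ring
  rw [tsum_congr key, Summable.tsum_add sum2 sum1, tsum_mul_left, tsum_mul_left,
    zeta_tsum h2, zeta_tsum h1]

lemma evalO {s : ℂ} (hs : 3 < s.re) :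
    ∑' m : ℕ, (((m : ℂ) + 1) * ((m : ℂ) + 2) / 2) * ((m : ℂ) + (((3 : ℝ) / 2 : ℝ) : ℂ)) ^ (-s)
      = (1 / 2) * (hzeta (s - 2) (1 / 2) - (2 : ℂ) ^ (s - 2))
        - (1 / 8) * (hzeta s (1 / 2) - (2 : ℂ) ^ s) := by
  have h2 := re_sub_two hs
  have hs1 : 1 < s.re := by linarith
  have key : ∀ m : ℕ,
      (((m : ℂ) + 1) * ((m : ℂ) + 2) / 2) * ((m : ℂ) + (((3 : ℝ) / 2 : ℝ) : ℂ)) ^ (-s)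
      = (1 / 2) * ((m : ℂ) + (((3 : ℝ) / 2 : ℝ) : ℂ)) ^ (-(s - 2))
        - (1 / 8) * ((m : ℂ) + (((3 : ℝ) / 2 : ℝ) : ℂ)) ^ (-s) := by
    intro m
    set x : ℂ := (m : ℂ) + (((3 : ℝ) / 2 : ℝ) : ℂ) with hx
    have hne : x ≠ 0 := by
      rw [hx, show ((m : ℂ) + (((3 : ℝ) / 2 : ℝ) : ℂ)) = (((m : ℝ) + 3 / 2 : ℝ) : ℂ) by
        push_cast; ring]
      exact_mod_cast (by positivity : ((m : ℝ) + 3 / 2 : ℝ) ≠ 0)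
    have ha : x ^ (-(s - 2)) = x ^ (2 : ℕ) * x ^ (-s) := by
      rw [show -(s - 2) = ((2 : ℕ) : ℂ) + (-s) by push_cast; ring,
        Complex.cpow_add _ _ hne, Complex.cpow_natCast]
    have hmm : ((m : ℂ) + 1) * ((m : ℂ) + 2) = x ^ (2 : ℕ) - 1 / 4 := by
      rw [hx]; push_cast; ring
    rw [ha, hmm]
    ring
  have sum2 : Summable (fun m : ℕ => ((m : ℂ) + (((3 : ℝ) / 2 : ℝ) : ℂ)) ^ (-(s - 2))) :=
    (summable_aux h2 (u := fun n => (n : ℝ) + 3 / 2) (fun n => by linarith)).congr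
      fun n => by congr 1; push_cast; ring
  have sums : Summable (fun m : ℕ => ((m : ℂ) + (((3 : ℝ) / 2 : ℝ) : ℂ)) ^ (-s)) :=
    (summable_aux hs1 (u := fun n => (n : ℝ) + 3 / 2) (fun n => by linarith)).congr
      fun n => by congr 1; push_cast; ring
  rw [tsum_congr key, Summable.tsum_sub (sum2.mul_left _) (sums.mul_left _),
    tsum_mul_left, tsum_mul_left, Pval h2, Pval hs1]


lemma hswap {s : ℂ} (hs : 3 < s.re) (k : ℕ) :
    ((k : ℂ) + 1) * hzeta s (2 * ((k : ℝ) + 1))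
      = (2 : ℂ) ^ (-s) * (∑' j : ℕ, ((k : ℂ) + 1) * ((k : ℂ) + (j : ℂ) + ((1 : ℝ) : ℂ)) ^ (-s))
        + (2 : ℂ) ^ (-s) *
          (∑' j : ℕ, ((k : ℂ) + 1) * ((k : ℂ) + (j : ℂ) + (((3 : ℝ) / 2 : ℝ) : ℂ)) ^ (-s)) := by
  have hs1 : 1 < s.re := by linarith
  have he : Summable (fun j : ℕ =>
      (((2 * j : ℕ) : ℂ) + ((2 * ((k : ℝ) + 1) : ℝ) : ℂ)) ^ (-s)) :=
    (summable_aux hs1 (u := fun j => 2 * j + (2 * (k : ℝ) + 2))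
      (fun n => by push_cast; linarith)).congr fun j => by congr 1; push_cast; ring
  have ho : Summable (fun j : ℕ =>
      (((2 * j + 1 : ℕ) : ℂ) + ((2 * ((k : ℝ) + 1) : ℝ) : ℂ)) ^ (-s)) :=
    (summable_aux hs1 (u := fun j => 2 * j + (2 * (k : ℝ) + 3))
      (fun n => by push_cast; linarith)).congr fun j => by congr 1; push_cast; ring
  have hsplit := tsum_even_add_odd
    (f := fun n : ℕ => ((n : ℂ) + ((2 * ((k : ℝ) + 1) : ℝ) : ℂ)) ^ (-s)) he ho
  have heval : ∀ j : ℕ, (((2 * j : ℕ) : ℂ) + ((2 * ((k : ℝ) + 1) : ℝ) : ℂ)) ^ (-s)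
      = (2 : ℂ) ^ (-s) * ((k : ℂ) + (j : ℂ) + ((1 : ℝ) : ℂ)) ^ (-s) := by
    intro j
    rw [show (((2 * j : ℕ) : ℂ) + ((2 * ((k : ℝ) + 1) : ℝ) : ℂ))
        = ((2 * ((k : ℝ) + (j : ℝ) + 1) : ℝ) : ℂ) by push_cast; ring,
      two_mul_cpow s (by positivity)]
    congr 1
    push_cast; ring
  have hoval : ∀ j : ℕ, (((2 * j + 1 : ℕ) : ℂ) + ((2 * ((k : ℝ) + 1) : ℝ) : ℂ)) ^ (-s)
      = (2 : ℂ) ^ (-s) * ((k : ℂ) + (j : ℂ) + (((3 : ℝ) / 2 : ℝ) : ℂ)) ^ (-s) := by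
    intro j
    rw [show (((2 * j + 1 : ℕ) : ℂ) + ((2 * ((k : ℝ) + 1) : ℝ) : ℂ))
        = ((2 * ((k : ℝ) + (j : ℝ) + 3 / 2) : ℝ) : ℂ) by push_cast; ring,
      two_mul_cpow s (by positivity)]
    congr 1
    push_cast; ring
  have hz : hzeta s (2 * ((k : ℝ) + 1))
      = (2 : ℂ) ^ (-s) * (∑' j : ℕ, ((k : ℂ) + (j : ℂ) + ((1 : ℝ) : ℂ)) ^ (-s))
        + (2 : ℂ) ^ (-s) *
          (∑' j : ℕ, ((k : ℂ) + (j : ℂ) + (((3 : ℝ) / 2 : ℝ) : ℂ)) ^ (-s)) := by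
    rw [hzeta, ← hsplit, tsum_congr heval, tsum_congr hoval, tsum_mul_left, tsum_mul_left]
  rw [hz, tsum_mul_left, tsum_mul_left]
  ring

end FM

theorem first_moment_sum_hurwitzZeta_even (s : ℂ) (hs : 3 < s.re) :
    ∑' k : ℕ, ((k : ℂ) + 1) * hzeta s (2 * ((k : ℝ) + 1))
      = (1 / 8) * ((1 + 2 ^ (1 - s)) * riemannZeta (s - 1) + riemannZeta (s - 2)
          - 2 ^ (1 - s) * (hzeta (s - 1) (1 / 2) + (1 / 2) * hzeta s (1 / 2))) := by
  have hA := FM.pair_summable hs (c := 1) le_rfl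
  have hB := FM.pair_summable hs (c := (3 : ℝ) / 2) (by norm_num)
  have SA : Summable (fun k : ℕ =>
      ∑' j : ℕ, ((k : ℂ) + 1) * ((k : ℂ) + (j : ℂ) + ((1 : ℝ) : ℂ)) ^ (-s)) :=
    (hA.hasSum.prod_fiberwise (fun k => (hA.prod_factor k).hasSum)).summable
  have SB : Summable (fun k : ℕ =>
      ∑' j : ℕ, ((k : ℂ) + 1) * ((k : ℂ) + (j : ℂ) + (((3 : ℝ) / 2 : ℝ) : ℂ)) ^ (-s)) :=
    (hB.hasSum.prod_fiberwise (fun k => (hB.prod_factor k).hasSum)).summable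
  have step1 : ∑' k : ℕ, ((k : ℂ) + 1) * hzeta s (2 * ((k : ℝ) + 1))
      = (2 : ℂ) ^ (-s) *
          (∑' (k : ℕ) (j : ℕ), ((k : ℂ) + 1) * ((k : ℂ) + (j : ℂ) + ((1 : ℝ) : ℂ)) ^ (-s))
        + (2 : ℂ) ^ (-s) *
          (∑' (k : ℕ) (j : ℕ),
            ((k : ℂ) + 1) * ((k : ℂ) + (j : ℂ) + (((3 : ℝ) / 2 : ℝ) : ℂ)) ^ (-s)) := by
    rw [tsum_congr (FM.hswap hs), Summable.tsum_add (SA.mul_left _) (SB.mul_left _),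
      tsum_mul_left, tsum_mul_left]
  rw [step1, FM.diag hs le_rfl, FM.diag hs (by norm_num : (1 : ℝ) ≤ 3 / 2),
    FM.evalE hs, FM.evalO hs, FM.half_lemma (FM.re_sub_two hs),
    FM.half_lemma (FM.re_sub_one hs)]
  have hmul : (2 : ℂ) ^ (-s) * (2 : ℂ) ^ s = 1 := by
    rw [← Complex.cpow_add _ _ two_ne_zero]; simp
  have h1s : (2 : ℂ) ^ (1 - s) = 2 * (2 : ℂ) ^ (-s) := by
    rw [show (1 : ℂ) - s = 1 + -s by ring, Complex.cpow_add _ _ two_ne_zero, Complex.cpow_one]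
  have hs1' : (2 : ℂ) ^ (s - 1) = (2 : ℂ) ^ s / 2 := by
    rw [Complex.cpow_sub _ _ two_ne_zero, Complex.cpow_one]
  have hs2' : (2 : ℂ) ^ (s - 2) = (2 : ℂ) ^ s / 4 := by
    rw [Complex.cpow_sub _ _ two_ne_zero]
    congr 1
    rw [show (2 : ℂ) = ((2 : ℕ) : ℂ) by norm_num, Complex.cpow_natCast]
    norm_num
  rw [h1s, hs1', hs2']
  linear_combination ((riemannZeta (s - 1) + riemannZeta (s - 2)) / 8) * hmul
end

section
/- For every complex number s with Re(s) > 4, one has ∑_{k=1}^∞ k² ζ(s, 2k) = (1/24){ (3·2^{1−s} − 1) ζ(s−1) + 6·2^{1−s} ζ(s−2) + ζ(s−3) }, where ζ denotes the Riemann zeta function. -/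
open Complex

namespace SecondMomentAux

/-- pair of consecutive terms -/
noncomputable def B (s : ℂ) (j : ℕ) : ℂ :=
  ((2 * j : ℕ) : ℂ) ^ (-s) + ((2 * j + 1 : ℕ) : ℂ) ^ (-s)

lemma summable_f0 {t : ℂ} (ht : 1 < t.re) : Summable (fun n : ℕ => ((n : ℕ) : ℂ) ^ (-t)) := by
  have := Complex.summable_one_div_nat_cpow.mpr ht
  simpa only [one_div, ← cpow_neg] using this

lemma tsum_f0 {t : ℂ} (ht : 1 < t.re) : ∑' n : ℕ, ((n : ℕ) : ℂ) ^ (-t) = riemannZeta t := by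
  rw [zeta_eq_tsum_one_div_nat_cpow ht]
  simp only [one_div, ← cpow_neg]

lemma tsum_f1 {t : ℂ} (ht : 1 < t.re) :
    ∑' n : ℕ, (((n + 1 : ℕ)) : ℂ) ^ (-t) = riemannZeta t := by
  have h0 : (((0 : ℕ)) : ℂ) ^ (-t) = 0 := by
    rw [Nat.cast_zero, zero_cpow]
    intro h
    rw [neg_eq_zero] at h
    rw [h] at ht
    norm_num at ht
  have h := Summable.tsum_eq_zero_add (summable_f0 ht)
  rw [tsum_f0 ht, h0, zero_add] at h
  exact h.symm

lemma natmul_cpow (a b : ℕ) (t : ℂ) :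
    ((a * b : ℕ) : ℂ) ^ t = ((a : ℕ) : ℂ) ^ t * ((b : ℕ) : ℂ) ^ t := by
  rw [Nat.cast_mul,
    show ((a : ℕ) : ℂ) = (((a : ℝ)) : ℂ) by norm_num,
    show ((b : ℕ) : ℂ) = (((b : ℝ)) : ℂ) by norm_num]
  exact mul_cpow_ofReal_nonneg (Nat.cast_nonneg a) (Nat.cast_nonneg b) t

lemma summable_odd {t : ℂ} (ht : 1 < t.re) :
    Summable (fun n : ℕ => ((2 * n + 1 : ℕ) : ℂ) ^ (-t)) :=
  (summable_f0 ht).comp_injective (fun a b h => by omega)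

lemma tsum_odd {t : ℂ} (ht : 1 < t.re) :
    ∑' n : ℕ, ((2 * n + 1 : ℕ) : ℂ) ^ (-t) = (1 - 2 ^ (-t)) * riemannZeta t := by
  have he : Summable (fun n : ℕ => ((2 * n : ℕ) : ℂ) ^ (-t)) :=
    (summable_f0 ht).comp_injective (fun a b h => by omega)
  have ho := summable_odd ht
  have h := tsum_even_add_odd (f := fun n : ℕ => ((n : ℕ) : ℂ) ^ (-t)) he ho
  have he2 : ∑' n : ℕ, ((2 * n : ℕ) : ℂ) ^ (-t) = 2 ^ (-t) * riemannZeta t := by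
    rw [← tsum_f0 ht, ← tsum_mul_left]
    refine tsum_congr fun n => ?_
    rw [natmul_cpow 2 n (-t)]
    norm_num
  rw [tsum_f0 ht, he2] at h
  linear_combination h

lemma tsum_odd1 {t : ℂ} (ht : 1 < t.re) :
    ∑' n : ℕ, ((2 * (n + 1) + 1 : ℕ) : ℂ) ^ (-t) = (1 - 2 ^ (-t)) * riemannZeta t - 1 := by
  have h := Summable.tsum_eq_zero_add (summable_odd ht)
  rw [tsum_odd ht] at h
  have h0 : ((2 * 0 + 1 : ℕ) : ℂ) ^ (-t) = 1 := by norm_num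
  rw [h0] at h
  linear_combination -h

lemma cpow_neg_sub (x : ℂ) (hx : x ≠ 0) (a : ℕ) (s : ℂ) :
    x ^ (-(s - (a : ℂ))) = x ^ a * x ^ (-s) := by
  rw [show -(s - (a : ℂ)) = (a : ℂ) + (-s) by ring, cpow_add _ _ hx, cpow_natCast]

lemma hzeta_eq {s : ℂ} (hs : 1 < s.re) (k : ℕ) :
    hzeta s (2 * ((k : ℝ) + 1)) = ∑' d : ℕ, B s (k + 1 + d) := by
  have hcast : ∀ n : ℕ, ((n : ℂ) + (((2 * ((k : ℝ) + 1)) : ℝ) : ℂ)) ^ (-s)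
      = ((n + (2 * k + 2) : ℕ) : ℂ) ^ (-s) := by
    intro n
    congr 1
    push_cast
    ring
  rw [hzeta, tsum_congr hcast]
  have he : Summable (fun d : ℕ => ((2 * d + (2 * k + 2) : ℕ) : ℂ) ^ (-s)) :=
    (summable_f0 hs).comp_injective (fun a b h => by omega)
  have ho : Summable (fun d : ℕ => ((2 * d + 1 + (2 * k + 2) : ℕ) : ℂ) ^ (-s)) :=
    (summable_f0 hs).comp_injective (fun a b h => by omega)
  rw [← tsum_even_add_odd (f := fun n : ℕ => ((n + (2 * k + 2) : ℕ) : ℂ) ^ (-s)) he ho,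
    ← Summable.tsum_add he ho]
  refine tsum_congr fun d => ?_
  rw [B, show 2 * d + (2 * k + 2) = 2 * (k + 1 + d) by ring,
    show 2 * d + 1 + (2 * k + 2) = 2 * (k + 1 + d) + 1 by ring]

lemma sum_sq (n : ℕ) :
    (∑ k ∈ Finset.range n, ((k : ℂ) + 1) ^ 2) * 6 = (n : ℂ) * ((n : ℂ) + 1) * (2 * (n : ℂ) + 1) := by
  induction n with
  | zero => simp
  | succ m ih =>
    rw [Finset.sum_range_succ, add_mul, ih]
    push_cast
    ring

lemma term_eq (s : ℂ) (n : ℕ) :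
    (((n : ℂ) + 1) * ((n : ℂ) + 2) * (2 * (n : ℂ) + 3) / 6) * B s (n + 1)
      = (2 : ℂ) ^ (-s) / 6 * (2 * ((n + 1 : ℕ) : ℂ) ^ (-(s - 3))
          + 3 * ((n + 1 : ℕ) : ℂ) ^ (-(s - 2)) + ((n + 1 : ℕ) : ℂ) ^ (-(s - 1)))
        + (1 / 24) * (((2 * (n + 1) + 1 : ℕ) : ℂ) ^ (-(s - 3))
          - ((2 * (n + 1) + 1 : ℕ) : ℂ) ^ (-(s - 1))) := by
  have hj : ((n + 1 : ℕ) : ℂ) ≠ 0 := Nat.cast_ne_zero.mpr (by omega)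
  have hm : ((2 * (n + 1) + 1 : ℕ) : ℂ) ≠ 0 := Nat.cast_ne_zero.mpr (by omega)
  rw [B, natmul_cpow 2 (n + 1) (-s),
    show (s - 3) = s - ((3 : ℕ) : ℂ) by norm_num,
    show (s - 2) = s - ((2 : ℕ) : ℂ) by norm_num,
    show (s - 1) = s - ((1 : ℕ) : ℂ) by norm_num,
    cpow_neg_sub _ hj 3 s, cpow_neg_sub _ hj 2 s, cpow_neg_sub _ hj 1 s,
    cpow_neg_sub _ hm 3 s, cpow_neg_sub _ hm 1 s]
  push_cast
  ring

end SecondMomentAux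

set_option maxHeartbeats 2000000 in
open SecondMomentAux in
theorem second_moment_sum_hurwitzZeta_even (s : ℂ) (hs : 4 < s.re) :
    ∑' k : ℕ, ((k : ℂ) + 1) ^ 2 * hzeta s (2 * ((k : ℝ) + 1))
      = (1 / 24) * ((3 * 2 ^ (1 - s) - 1) * riemannZeta (s - 1)
          + 6 * 2 ^ (1 - s) * riemannZeta (s - 2) + riemannZeta (s - 3)) := by
  have hs1 : 1 < s.re := by linarith
  have hs2 : 1 < (s - 1).re := by rw [sub_re]; norm_num; linarith
  have hs3 : 1 < (s - 2).re := by rw [sub_re]; norm_num; linarith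
  have hs4 : 1 < (s - 3).re := by rw [sub_re]; norm_num; linarith
  set F : ℕ × ℕ → ℂ := fun p => ((p.1 : ℂ) + 1) ^ 2 * B s (p.1 + 1 + p.2) with hF
  -- norm bound on B
  have hBnorm : ∀ j : ℕ, 1 ≤ j → ‖B s j‖ ≤ 2 * (j : ℝ) ^ (-s.re) := by
    intro j hj
    have hjpos : (0 : ℝ) < (j : ℝ) := by exact_mod_cast hj
    have h1 : ‖((2 * j : ℕ) : ℂ) ^ (-s)‖ ≤ (j : ℝ) ^ (-s.re) := by
      rw [norm_natCast_cpow_of_pos (by omega) (-s), neg_re]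
      exact Real.rpow_le_rpow_of_nonpos hjpos (by exact_mod_cast Nat.le_mul_of_pos_left j two_pos)
        (by linarith)
    have h2 : ‖((2 * j + 1 : ℕ) : ℂ) ^ (-s)‖ ≤ (j : ℝ) ^ (-s.re) := by
      rw [norm_natCast_cpow_of_pos (by omega) (-s), neg_re]
      exact Real.rpow_le_rpow_of_nonpos hjpos (by exact_mod_cast by omega) (by linarith)
    calc ‖B s j‖ ≤ ‖((2 * j : ℕ) : ℂ) ^ (-s)‖ + ‖((2 * j + 1 : ℕ) : ℂ) ^ (-s)‖ := norm_add_le _ _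
      _ ≤ (j : ℝ) ^ (-s.re) + (j : ℝ) ^ (-s.re) := add_le_add h1 h2
      _ = 2 * (j : ℝ) ^ (-s.re) := by ring
  -- bound for antidiagonal sums of norms
  have hrow : ∀ n : ℕ, ∑ kl ∈ Finset.HasAntidiagonal.antidiagonal n, ‖F kl‖
      ≤ 2 * ((n + 1 : ℕ) : ℝ) ^ (3 - s.re) := by
    intro n
    have hpos : (0 : ℝ) < ((n + 1 : ℕ) : ℝ) := by positivity
    have hterm : ∀ kl ∈ Finset.HasAntidiagonal.antidiagonal n,
        ‖F kl‖ ≤ ((n + 1 : ℕ) : ℝ) ^ 2 * (2 * ((n + 1 : ℕ) : ℝ) ^ (-s.re)) := by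
      intro kl hkl
      rw [Finset.HasAntidiagonal.mem_antidiagonal] at hkl
      have hk1 : kl.1 + 1 + kl.2 = n + 1 := by omega
      rw [hF]
      simp only
      rw [hk1, norm_mul, norm_pow]
      have hn1 : ‖(kl.1 : ℂ) + 1‖ = ((kl.1 + 1 : ℕ) : ℝ) := by
        rw [show (kl.1 : ℂ) + 1 = ((kl.1 + 1 : ℕ) : ℂ) by push_cast; ring, Complex.norm_natCast]
      rw [hn1]
      have hb1 : ((kl.1 + 1 : ℕ) : ℝ) ^ 2 ≤ ((n + 1 : ℕ) : ℝ) ^ 2 := by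
        have h' : ((kl.1 + 1 : ℕ) : ℝ) ≤ ((n + 1 : ℕ) : ℝ) := by exact_mod_cast by omega
        exact pow_le_pow_left₀ (by positivity) h' 2
      exact mul_le_mul hb1 (hBnorm (n + 1) (by omega)) (norm_nonneg _) (by positivity)
    calc ∑ kl ∈ Finset.HasAntidiagonal.antidiagonal n, ‖F kl‖
        ≤ (Finset.HasAntidiagonal.antidiagonal n).card • (((n + 1 : ℕ) : ℝ) ^ 2 * (2 * ((n + 1 : ℕ) : ℝ) ^ (-s.re))) :=
          Finset.sum_le_card_nsmul _ _ _ hterm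
      _ = ((n + 1 : ℕ) : ℝ) * (((n + 1 : ℕ) : ℝ) ^ 2 * (2 * ((n + 1 : ℕ) : ℝ) ^ (-s.re))) := by
          rw [Finset.Nat.card_antidiagonal, nsmul_eq_mul]
      _ = 2 * ((n + 1 : ℕ) : ℝ) ^ (3 - s.re) := by
          rw [show (3 : ℝ) - s.re = (((3 : ℕ) : ℝ)) + (-s.re) by push_cast; ring,
            Real.rpow_add hpos, Real.rpow_natCast]
          ring
  -- summability of the bound
  have hsb : Summable (fun n : ℕ => 2 * ((n + 1 : ℕ) : ℝ) ^ (3 - s.re)) := by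
    apply Summable.mul_left
    exact (summable_nat_add_iff 1).2 (Real.summable_nat_rpow.2 (by linarith))
  have hS : Summable (fun n : ℕ => ∑ kl ∈ Finset.HasAntidiagonal.antidiagonal n, ‖F kl‖) :=
    Summable.of_nonneg_of_le (fun n => Finset.sum_nonneg fun _ _ => norm_nonneg _) hrow hsb
  have hFnorm : Summable (fun p : ℕ × ℕ => ‖F p‖) := by
    rw [← Finset.HasAntidiagonal.sigmaAntidiagonalEquivProd.summable_iff]
    refine (summable_sigma_of_nonneg fun _ => norm_nonneg _).2
      ⟨fun n => (hasSum_fintype _).summable, ?_⟩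
    refine hS.congr fun n => ?_
    rw [← Finset.sum_finset_coe, ← tsum_fintype (L := SummationFilter.unconditional _)]
    rfl
  have hFsum : Summable F := hFnorm.of_norm
  have hrowB : ∀ k : ℕ, Summable (fun d : ℕ => B s (k + 1 + d)) := by
    intro k
    apply Summable.add
    · exact (summable_f0 hs1).comp_injective (fun a b h => by omega)
    · exact (summable_f0 hs1).comp_injective (fun a b h => by omega)
  have step1 : ∑' k : ℕ, ((k : ℂ) + 1) ^ 2 * hzeta s (2 * ((k : ℝ) + 1))
      = ∑' k : ℕ, ∑' d : ℕ, F (k, d) := by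
    refine tsum_congr fun k => ?_
    rw [hzeta_eq hs1 k, ← tsum_mul_left]
  have step2 : ∑' k : ℕ, ∑' d : ℕ, F (k, d) = ∑' p : ℕ × ℕ, F p := by
    refine (Summable.tsum_prod' hFsum fun k => ?_).symm
    simp only [hF]
    exact (hrowB k).mul_left _
  have hsigma : Summable (F ∘ ⇑Finset.HasAntidiagonal.sigmaAntidiagonalEquivProd) :=
    Finset.HasAntidiagonal.sigmaAntidiagonalEquivProd.summable_iff.2 hFsum
  have key := Summable.tsum_sigma' (f := F ∘ ⇑Finset.HasAntidiagonal.sigmaAntidiagonalEquivProd)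
    (fun n => (hasSum_fintype _).summable) hsigma
  have step3 : ∑' p : ℕ × ℕ, F p = ∑' n : ℕ, ∑ kl ∈ Finset.HasAntidiagonal.antidiagonal n, F kl := by
    rw [← Finset.HasAntidiagonal.sigmaAntidiagonalEquivProd.tsum_eq F]
    refine Eq.trans key (tsum_congr fun n => ?_)
    conv_rhs => rw [← Finset.sum_finset_coe, ← tsum_fintype (L := SummationFilter.unconditional _)]
    rfl
  have hssq : ∀ n : ℕ, (∑ k ∈ Finset.range (n + 1), ((k : ℂ) + 1) ^ 2)
      = ((n : ℂ) + 1) * ((n : ℂ) + 2) * (2 * (n : ℂ) + 3) / 6 := by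
    intro n
    have h := sum_sq (n + 1)
    push_cast at h
    field_simp
    linear_combination h
  have step4 : ∑' n : ℕ, ∑ kl ∈ Finset.HasAntidiagonal.antidiagonal n, F kl
      = ∑' n : ℕ, ((((n : ℂ) + 1) * ((n : ℂ) + 2) * (2 * (n : ℂ) + 3) / 6) * B s (n + 1)) := by
    refine tsum_congr fun n => ?_
    rw [Finset.Nat.sum_antidiagonal_eq_sum_range_succ_mk]
    have hcongr : ∀ k ∈ Finset.range (n + 1), F (k, n - k) = ((k : ℂ) + 1) ^ 2 * B s (n + 1) := by
      intro k hk
      rw [Finset.mem_range] at hk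
      rw [hF]
      simp only
      congr 2
      omega
    rw [Finset.sum_congr rfl hcongr, ← Finset.sum_mul, hssq n]
  have sA : Summable (fun n : ℕ => ((n + 1 : ℕ) : ℂ) ^ (-(s - 3))) :=
    (summable_nat_add_iff 1).2 (summable_f0 hs4)
  have sB : Summable (fun n : ℕ => ((n + 1 : ℕ) : ℂ) ^ (-(s - 2))) :=
    (summable_nat_add_iff 1).2 (summable_f0 hs3)
  have sC : Summable (fun n : ℕ => ((n + 1 : ℕ) : ℂ) ^ (-(s - 1))) :=
    (summable_nat_add_iff 1).2 (summable_f0 hs2)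
  have sO3 : Summable (fun n : ℕ => ((2 * (n + 1) + 1 : ℕ) : ℂ) ^ (-(s - 3))) :=
    (summable_f0 hs4).comp_injective (fun a b h => by omega)
  have sO1 : Summable (fun n : ℕ => ((2 * (n + 1) + 1 : ℕ) : ℂ) ^ (-(s - 1))) :=
    (summable_f0 hs2).comp_injective (fun a b h => by omega)
  have hA : HasSum (fun n : ℕ => ((n + 1 : ℕ) : ℂ) ^ (-(s - 3))) (riemannZeta (s - 3)) :=
    sA.hasSum_iff.2 (tsum_f1 hs4)
  have hB2 : HasSum (fun n : ℕ => ((n + 1 : ℕ) : ℂ) ^ (-(s - 2))) (riemannZeta (s - 2)) :=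
    sB.hasSum_iff.2 (tsum_f1 hs3)
  have hC2 : HasSum (fun n : ℕ => ((n + 1 : ℕ) : ℂ) ^ (-(s - 1))) (riemannZeta (s - 1)) :=
    sC.hasSum_iff.2 (tsum_f1 hs2)
  have hO3 : HasSum (fun n : ℕ => ((2 * (n + 1) + 1 : ℕ) : ℂ) ^ (-(s - 3)))
      ((1 - 2 ^ (-(s - 3))) * riemannZeta (s - 3) - 1) := sO3.hasSum_iff.2 (tsum_odd1 hs4)
  have hO1 : HasSum (fun n : ℕ => ((2 * (n + 1) + 1 : ℕ) : ℂ) ^ (-(s - 1)))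
      ((1 - 2 ^ (-(s - 1))) * riemannZeta (s - 1) - 1) := sO1.hasSum_iff.2 (tsum_odd1 hs2)
  have Htot := (((hA.mul_left ((2 : ℂ) ^ (-s) / 6 * 2)).add
      (hB2.mul_left ((2 : ℂ) ^ (-s) / 6 * 3))).add
      (hC2.mul_left ((2 : ℂ) ^ (-s) / 6))).add ((hO3.sub hO1).mul_left (1 / 24))
  have step5 : ∑' n : ℕ, ((((n : ℂ) + 1) * ((n : ℂ) + 2) * (2 * (n : ℂ) + 3) / 6) * B s (n + 1))
      = 2 ^ (-s) / 6 * 2 * riemannZeta (s - 3) + 2 ^ (-s) / 6 * 3 * riemannZeta (s - 2) +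
          2 ^ (-s) / 6 * riemannZeta (s - 1) +
        1 / 24 * ((1 - 2 ^ (-(s - 3))) * riemannZeta (s - 3) - 1 -
          ((1 - 2 ^ (-(s - 1))) * riemannZeta (s - 1) - 1)) := by
    refine Eq.trans (tsum_congr fun n => ?_) Htot.tsum_eq
    rw [term_eq s n]
    ring
  rw [step1, step2, step3, step4, step5]
  have h2ne : (2 : ℂ) ≠ 0 := two_ne_zero
  have e3 : (2 : ℂ) ^ (-(s - 3)) = 8 * 2 ^ (-s) := by
    rw [show (s - 3) = s - ((3 : ℕ) : ℂ) by norm_num, cpow_neg_sub 2 h2ne 3 s]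
    norm_num
  have e1 : (2 : ℂ) ^ (-(s - 1)) = 2 * 2 ^ (-s) := by
    rw [show (s - 1) = s - ((1 : ℕ) : ℂ) by norm_num, cpow_neg_sub 2 h2ne 1 s]
    norm_num
  have e1' : (2 : ℂ) ^ (1 - s) = 2 * 2 ^ (-s) := by rw [show 1 - s = -(s - 1) by ring, e1]
  rw [e3, e1, e1']
  ring
end

section
/- Transformation formula: for all real numbers a > 0 and b > 0 and every complex number s with Re(s) > 2, one has ∑_{k=0}^∞ ζ(s, ka+b) = a^{−s} ∑_{n=0}^∞ ζ(s, (n+b)/a). -/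
open Complex

set_option maxHeartbeats 1000000

lemma summable_shift_rpow {c t : ℝ} (hc : 0 < c) (ht : 1 < t) :
    Summable (fun n : ℕ => ((n : ℝ) + c) ^ (-t)) := by
  refine ((Real.summable_one_div_nat_add_rpow c t).mpr ht).congr fun n => ?_
  have h : (0:ℝ) < (n : ℝ) + c := by positivity
  rw [abs_of_pos h, Real.rpow_neg h.le, one_div]

lemma summable_double {a b σ : ℝ} (ha : 0 < a) (hb : 0 < b) (hσ : 2 < σ) :
    Summable (fun p : ℕ × ℕ => (((p.2 : ℝ) + (p.1 : ℝ) * a + b) ^ (-(σ/2))) *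
      (((p.2 : ℝ) + (p.1 : ℝ) * a + b) ^ (-(σ/2)))) := by
  have ht : 1 < σ / 2 := by linarith
  set t := σ / 2
  have h1 : Summable (fun n : ℕ => ((n : ℝ) + b/2) ^ (-t)) :=
    summable_shift_rpow (by positivity) ht
  have h2 : Summable (fun k : ℕ => ((k : ℝ) * a + b/2) ^ (-t)) := by
    have := (summable_shift_rpow (c := b/(2*a)) (by positivity) ht).mul_left (a ^ (-t))
    refine this.congr fun k => ?_
    rw [← Real.mul_rpow ha.le (by positivity)]
    congr 1
    field_simp
  have hprod := h2.mul_of_nonneg h1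
    (fun k => Real.rpow_nonneg (by positivity) _)
    (fun n => Real.rpow_nonneg (by positivity) _)
  refine Summable.of_nonneg_of_le (fun p => by positivity) (fun p => ?_) hprod
  have hX : (0:ℝ) < (p.2 : ℝ) + (p.1 : ℝ) * a + b := by positivity
  have hu : (0:ℝ) < (p.1 : ℝ) * a + b/2 := by positivity
  have hv : (0:ℝ) < (p.2 : ℝ) + b/2 := by positivity
  have h1' : (p.1 : ℝ) * a + b/2 ≤ (p.2 : ℝ) + (p.1 : ℝ) * a + b := by
    have : (0:ℝ) ≤ (p.2 : ℝ) := Nat.cast_nonneg _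
    linarith
  have h2' : (p.2 : ℝ) + b/2 ≤ (p.2 : ℝ) + (p.1 : ℝ) * a + b := by
    have : (0:ℝ) ≤ (p.1 : ℝ) * a := by positivity
    linarith
  have hneg : -t ≤ 0 := by linarith
  exact mul_le_mul (Real.rpow_le_rpow_of_nonpos hu h1' hneg)
    (Real.rpow_le_rpow_of_nonpos hv h2' hneg)
    (Real.rpow_nonneg hX.le _) (Real.rpow_nonneg hu.le _)

lemma summable_double_cpow {a b : ℝ} (ha : 0 < a) (hb : 0 < b) {s : ℂ} (hs : 2 < s.re) :
    Summable (fun p : ℕ × ℕ => ((((p.2 : ℝ) + (p.1 : ℝ) * a + b : ℝ)) : ℂ) ^ (-s)) := by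
  refine Summable.of_norm (((summable_double ha hb hs).congr fun p => ?_))
  have hX : (0:ℝ) < (p.2 : ℝ) + (p.1 : ℝ) * a + b := by positivity
  rw [← Real.rpow_add hX, Complex.norm_cpow_eq_rpow_re_of_pos hX]
  congr 1
  simp [Complex.neg_re]
  ring

theorem sum_hurwitzZeta_transformation (a b : ℝ) (ha : 0 < a) (hb : 0 < b)
    (s : ℂ) (hs : 2 < s.re) :
    ∑' k : ℕ, hzeta s ((k : ℝ) * a + b)
      = (a : ℂ) ^ (-s) * ∑' n : ℕ, hzeta s (((n : ℝ) + b) / a) := by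
  have hsum := summable_double_cpow ha hb hs
  set f : ℕ → ℕ → ℂ := fun k n => ((((n : ℝ) + (k : ℝ) * a + b : ℝ)) : ℂ) ^ (-s) with hf
  have hL : ∑' k : ℕ, hzeta s ((k : ℝ) * a + b) = ∑' (k) (n), f k n := by
    refine tsum_congr fun k => tsum_congr fun n => ?_
    simp only [hzeta, hf]
    congr 1
    push_cast
    ring
  have hR : (a : ℂ) ^ (-s) * ∑' n : ℕ, hzeta s (((n : ℝ) + b) / a)
      = ∑' (n) (k), f k n := by
    rw [← tsum_mul_left]
    refine tsum_congr fun n => ?_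
    simp only [hzeta]
    rw [← tsum_mul_left]
    refine tsum_congr fun k => ?_
    have h1 : ((k : ℂ) + ((((n : ℝ) + b) / a : ℝ) : ℂ)) =
        ((((k : ℝ) + ((n : ℝ) + b) / a : ℝ)) : ℂ) := by push_cast; ring
    have h2 : a * ((k:ℝ) + ((n:ℝ) + b) / a) = (n:ℝ) + (k:ℝ) * a + b := by
      field_simp
      ring
    rw [h1, ← Complex.mul_cpow_ofReal_nonneg ha.le (by positivity),
      ← Complex.ofReal_mul, h2]
  rw [hL, hR]
  exact (Summable.tsum_comm (f := f) hsum).symm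
end
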